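/- There exists ε₀ > 0 such that for all 0 < ε ≤ ε₀ the following hold: w is continuous on [0,1] \ {x₀, 1−x₀}; w is Lebesgue integrable on [0,1]; w(x) > 0 for all x ∈ [0,1] \ {x₀, 1−x₀}; w(x) → ∞ as x → x₀ and as x → 1−x₀. Moreover, for every fixed x ∈ (0,1), p(x) → 1/6 and w(x) → 1 as ε → 0. -/

import Mathlib

open Real Set Filter Topology MeasureTheory
set_option maxHeartbeats 1000000

/-- The degenerate point `x₀ = (2 − √3)ε`. -/
noncomputable def x0 (ε : ℝ) : ℝ := (2 - Real.sqrt 3) * ε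

/-- Leading coefficient `φ₂` of `D_ε` on the interval. -/
noncomputable def phi2 (ε x : ℝ) : ℝ :=
  if x ≤ ε then (1/12) * (1 - 4*(x/ε) + (x/ε)^2)
  else if x ≤ 1 - ε then -(1/6)
  else (1/12) * (1 - 4*((1-x)/ε) + ((1-x)/ε)^2)

/-- First-order coefficient `φ₁` of `D_ε` on the interval. -/
noncomputable def phi1 (ε x : ℝ) : ℝ :=
  if x ≤ ε then -6 * (1 - x/ε) * ((1 + x/ε)^3)⁻¹
  else if x ≤ 1 - ε then 0
  else 6 * (1 - (1-x)/ε) * ((1 + (1-x)/ε)^3)⁻¹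

/-- Integration-factor function `g` on `[0, ε]`. -/
noncomputable def gfun (ε x : ℝ) : ℝ :=
  Real.sign (x - x0 ε) * |x - x0 ε| ^ ((4 + 2*Real.sqrt 3) * ε) *
    |x - 4*ε + x0 ε| ^ ((4 - 2*Real.sqrt 3) * ε) *
    (x + ε) ^ (-(8*ε)) *
    Real.exp (12*ε^3/(ε+x)^2 + 12*ε^2/(ε+x))

/-- Sturm–Liouville principal coefficient `p`. -/
noncomputable def pfun (ε x : ℝ) : ℝ :=
  if x ≤ ε then gfun ε x / (6 * gfun ε ε)
  else if x ≤ 1 - ε then 1/6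
  else gfun ε (1-x) / (6 * gfun ε ε)

/-- Sturm–Liouville weight `w = -p/φ₂`. -/
noncomputable def wfun (ε x : ℝ) : ℝ := -pfun ε x / phi2 ε x

namespace StmtAux

lemma s3_sq : Real.sqrt 3 ^ 2 = 3 := Real.sq_sqrt (by norm_num)

lemma one_lt_s3 : 1 < Real.sqrt 3 := by
  nlinarith [s3_sq, Real.sqrt_nonneg 3]

lemma s3_lt_two : Real.sqrt 3 < 2 := by
  nlinarith [s3_sq, Real.sqrt_nonneg 3]

variable {ε x : ℝ}

lemma x0_pos (hε : 0 < ε) : 0 < x0 ε := by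
  have := s3_lt_two; unfold x0; nlinarith

lemma x0_lt (hε : 0 < ε) : x0 ε < ε := by
  have := one_lt_s3; unfold x0; nlinarith

lemma phi2_left (hε : 0 < ε) (hx : x ≤ ε) :
    phi2 ε x = (x - x0 ε) * (x - (2 + Real.sqrt 3) * ε) / (12 * ε ^ 2) := by
  unfold phi2 x0
  rw [if_pos hx]
  have hε' : ε ≠ 0 := ne_of_gt hε
  have expand : (x - (2 - Real.sqrt 3) * ε) * (x - (2 + Real.sqrt 3) * ε)
      = x^2 - 4*ε*x + (4 - Real.sqrt 3 ^ 2) * ε^2 := by ring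
  rw [expand, s3_sq]
  field_simp
  ring

/-- The auxiliary continuous positive factor in the formula for `w` on `[0, ε]`. -/
noncomputable def Hfun (ε x : ℝ) : ℝ :=
  |x - (2 + Real.sqrt 3) * ε| ^ ((4 - 2*Real.sqrt 3) * ε - 1) *
    (x + ε) ^ (-(8*ε)) * Real.exp (12*ε^3/(ε+x)^2 + 12*ε^2/(ε+x))

lemma sign_mul_abs_rpow {u a : ℝ} (hu : u ≠ 0) :
    Real.sign u * |u| ^ a = u * |u| ^ (a - 1) := by
  have h : |u| ^ a = |u| ^ (a - 1) * |u| := by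
    rw [← Real.rpow_add_one (abs_ne_zero.2 hu)]; ring_nf
  rw [h]
  rcases hu.lt_or_gt with h' | h'
  · rw [Real.sign_of_neg h', abs_of_neg h']; ring
  · rw [Real.sign_of_pos h', abs_of_pos h']; ring

lemma abs_rpow_of_neg {v b : ℝ} (hv : v < 0) :
    |v| ^ b = -v * |v| ^ (b - 1) := by
  have h : |v| ^ b = |v| ^ (b - 1) * |v| := by
    rw [← Real.rpow_add_one (abs_ne_zero.2 hv.ne)]; ring_nf
  rw [h, abs_of_neg hv]; ring

lemma gfun_eps_pos (hε : 0 < ε) : 0 < gfun ε ε := by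
  have h1 : 0 < ε - x0 ε := sub_pos.2 (x0_lt hε)
  have h2 : ε - 4*ε + x0 ε < 0 := by
    have := one_lt_s3; unfold x0; nlinarith
  unfold gfun
  rw [Real.sign_of_pos h1]
  have e1 : (0:ℝ) < |ε - x0 ε| ^ ((4 + 2*Real.sqrt 3) * ε) :=
    Real.rpow_pos_of_pos (abs_pos.2 h1.ne') _
  have e2 : (0:ℝ) < |ε - 4*ε + x0 ε| ^ ((4 - 2*Real.sqrt 3) * ε) :=
    Real.rpow_pos_of_pos (abs_pos.2 h2.ne) _
  have e3 : (0:ℝ) < (ε + ε) ^ (-(8*ε)) := Real.rpow_pos_of_pos (by linarith) _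
  have e4 := Real.exp_pos (12*ε^3/(ε+ε)^2 + 12*ε^2/(ε+ε))
  nlinarith [mul_pos (mul_pos e1 e2) (mul_pos e3 e4)]

lemma gfun_left_eq (hx0 : 0 ≤ x) (hxε : x ≤ ε) (hne : x ≠ x0 ε) (hε : 0 < ε) :
    gfun ε x = -((x - x0 ε) * (x - (2 + Real.sqrt 3) * ε)) *
      (|x - x0 ε| ^ ((4 + 2*Real.sqrt 3) * ε - 1) * Hfun ε x) := by
  have hu : x - x0 ε ≠ 0 := sub_ne_zero.2 hne
  have hv : x - (2 + Real.sqrt 3) * ε < 0 := by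
    have := one_lt_s3; nlinarith
  have hx4 : x - 4*ε + x0 ε = x - (2 + Real.sqrt 3) * ε := by unfold x0; ring
  unfold gfun Hfun
  rw [hx4, sign_mul_abs_rpow hu, abs_rpow_of_neg hv]
  ring

lemma wfun_left (hε : 0 < ε) (hx0 : 0 ≤ x) (hxε : x ≤ ε) (hne : x ≠ x0 ε) :
    wfun ε x = (2 * ε ^ 2 / gfun ε ε) *
      (|x - x0 ε| ^ ((4 + 2*Real.sqrt 3) * ε - 1) * Hfun ε x) := by
  have hu : x - x0 ε ≠ 0 := sub_ne_zero.2 hne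
  have hv : x - (2 + Real.sqrt 3) * ε < 0 := by
    have := one_lt_s3; nlinarith
  have hg : gfun ε ε ≠ 0 := (gfun_eps_pos hε).ne'
  unfold wfun pfun
  rw [if_pos hxε, phi2_left hε hxε, gfun_left_eq hx0 hxε hne hε]
  set Q := |x - x0 ε| ^ ((4 + 2*Real.sqrt 3) * ε - 1) * Hfun ε x with hQd
  set u := x - x0 ε with hud
  set v := x - (2 + Real.sqrt 3) * ε with hvd
  have hvne : v ≠ 0 := hv.ne
  have hεne : ε ≠ 0 := hε.ne'
  field_simp
  ring

lemma Hfun_continuousAt (hε : 0 < ε) (hx : -ε < x) (hne : x ≠ (2 + Real.sqrt 3) * ε) :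
    ContinuousAt (Hfun ε) x := by
  have hd : ε + x ≠ 0 := by intro h; rw [add_comm] at h; linarith [eq_neg_of_add_eq_zero_left h]
  have h1 : ContinuousAt
      (fun y : ℝ => |y - (2 + Real.sqrt 3) * ε| ^ ((4 - 2*Real.sqrt 3) * ε - 1)) x :=
    ContinuousAt.rpow_const (continuous_abs.comp (continuous_sub_right _)).continuousAt
      (Or.inl (abs_ne_zero.2 (sub_ne_zero.2 hne)))
  have h2 : ContinuousAt (fun y : ℝ => (y + ε) ^ (-(8*ε))) x :=
    ContinuousAt.rpow_const (continuous_add_right ε).continuousAt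
      (Or.inl (by intro h; rw [add_comm] at h; exact hd (by linarith [h] )))
  have h3 : ContinuousAt (fun y : ℝ => Real.exp (12*ε^3/(ε+y)^2 + 12*ε^2/(ε+y))) x := by
    apply Real.continuous_exp.continuousAt.comp
    apply ContinuousAt.add
    · exact continuousAt_const.div
        (((continuous_const.add continuous_id).pow 2).continuousAt) (pow_ne_zero 2 hd)
    · exact continuousAt_const.div ((continuous_const.add continuous_id).continuousAt) hd
  exact (h1.mul h2).mul h3

lemma Hfun_pos (hε : 0 < ε) (hx : -ε < x) (hne : x ≠ (2 + Real.sqrt 3) * ε) :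
    0 < Hfun ε x := by
  unfold Hfun
  have e1 : (0:ℝ) < |x - (2 + Real.sqrt 3) * ε| ^ ((4 - 2*Real.sqrt 3) * ε - 1) :=
    Real.rpow_pos_of_pos (abs_pos.2 (sub_ne_zero.2 hne)) _
  have e2 : (0:ℝ) < (x + ε) ^ (-(8*ε)) := Real.rpow_pos_of_pos (by linarith) _
  exact mul_pos (mul_pos e1 e2) (Real.exp_pos _)

lemma ne_vpt (hε : 0 < ε) (hxε : x ≤ ε) : x ≠ (2 + Real.sqrt 3) * ε := by
  have := one_lt_s3; intro h; nlinarith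

lemma Kpos (hε : 0 < ε) : 0 < 2 * ε ^ 2 / gfun ε ε :=
  div_pos (by positivity) (gfun_eps_pos hε)

lemma left_pos (hε : 0 < ε) (hx0 : 0 ≤ x) (hxε : x ≤ ε) (hne : x ≠ x0 ε) :
    0 < wfun ε x := by
  rw [wfun_left hε hx0 hxε hne]
  exact mul_pos (Kpos hε)
    (mul_pos (Real.rpow_pos_of_pos (abs_pos.2 (sub_ne_zero.2 hne)) _)
      (Hfun_pos hε (by linarith) (ne_vpt hε hxε)))

lemma left_cont (hε : 0 < ε) : ContinuousOn (wfun ε) (Icc 0 ε \ {x0 ε}) := by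
  have hc : ContinuousOn (fun x => (2 * ε ^ 2 / gfun ε ε) *
      (|x - x0 ε| ^ ((4 + 2*Real.sqrt 3) * ε - 1) * Hfun ε x)) (Icc 0 ε \ {x0 ε}) := by
    intro x hx
    obtain ⟨⟨hx0, hxε⟩, hne⟩ := hx
    rw [mem_singleton_iff] at hne
    refine ContinuousAt.continuousWithinAt ?_
    refine continuousAt_const.mul (ContinuousAt.mul ?_ (Hfun_continuousAt hε (by linarith)
      (ne_vpt hε hxε)))
    exact ContinuousAt.rpow_const (continuous_abs.comp (continuous_sub_right _)).continuousAt
      (Or.inl (abs_ne_zero.2 (sub_ne_zero.2 hne)))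
  refine hc.congr fun x hx => ?_
  obtain ⟨⟨hx0, hxε⟩, hne⟩ := hx
  rw [mem_singleton_iff] at hne
  exact wfun_left hε hx0 hxε hne

lemma exponent_bounds (hε : 0 < ε) (hε8 : ε ≤ 1/8) :
    -1 < (4 + 2*Real.sqrt 3) * ε - 1 ∧ (4 + 2*Real.sqrt 3) * ε - 1 < 0 := by
  have h1 := one_lt_s3
  have h2 := s3_lt_two
  constructor <;> nlinarith

lemma left_tendsto (hε : 0 < ε) (hε8 : ε ≤ 1/8) :
    Tendsto (wfun ε) (𝓝[≠] (x0 ε)) atTop := by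
  obtain ⟨hb1, hb2⟩ := exponent_bounds hε hε8
  have habs : Tendsto (fun x => |x - x0 ε|) (𝓝[≠] (x0 ε)) (𝓝[>] 0) := by
    rw [tendsto_nhdsWithin_iff]
    constructor
    · have h := (continuous_abs.comp (continuous_sub_right (x0 ε))).tendsto (x0 ε)
      simp only [Function.comp, sub_self, abs_zero] at h
      exact h.mono_left nhdsWithin_le_nhds
    · filter_upwards [self_mem_nhdsWithin] with x hx
      exact mem_Ioi.2 (abs_pos.2 (sub_ne_zero.2 hx))
  have hpow : Tendsto (fun y : ℝ => y ^ ((4 + 2*Real.sqrt 3) * ε - 1)) (𝓝[>] (0:ℝ)) atTop := by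
    have h1 : Tendsto (fun y : ℝ => (y⁻¹) ^ (1 - (4 + 2*Real.sqrt 3) * ε)) (𝓝[>] (0:ℝ)) atTop :=
      (tendsto_rpow_atTop (by linarith)).comp tendsto_inv_nhdsGT_zero
    refine h1.congr' ?_
    filter_upwards [self_mem_nhdsWithin] with y hy
    rw [Real.inv_rpow (le_of_lt hy), ← Real.rpow_neg (le_of_lt hy), neg_sub]
  have hblow : Tendsto (fun x => |x - x0 ε| ^ ((4 + 2*Real.sqrt 3) * ε - 1))
      (𝓝[≠] (x0 ε)) atTop := hpow.comp habs
  have hx0p := x0_pos hε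
  have hx0l := x0_lt hε
  have hxne : x0 ε ≠ (2 + Real.sqrt 3) * ε := by
    have := one_lt_s3; unfold x0; intro h; nlinarith
  have hKH : Tendsto (fun x => (2 * ε ^ 2 / gfun ε ε) * Hfun ε x) (𝓝[≠] (x0 ε))
      (𝓝 ((2 * ε ^ 2 / gfun ε ε) * Hfun ε (x0 ε))) := by
    have hcH := (Hfun_continuousAt hε (by linarith : -ε < x0 ε) hxne).tendsto
    exact (hcH.const_mul _).mono_left nhdsWithin_le_nhds
  have hCpos : 0 < (2 * ε ^ 2 / gfun ε ε) * Hfun ε (x0 ε) :=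
    mul_pos (Kpos hε) (Hfun_pos hε (by linarith) hxne)
  have main := hKH.pos_mul_atTop hCpos hblow
  refine main.congr' ?_
  filter_upwards [mem_nhdsWithin_of_mem_nhds (Ioo_mem_nhds hx0p hx0l), self_mem_nhdsWithin]
    with x hx hx'
  rw [wfun_left hε hx.1.le hx.2.le hx']
  ring

lemma rpow_integrable (hε : 0 < ε) (hε8 : ε ≤ 1/8) :
    IntegrableOn (fun x => |x - x0 ε| ^ ((4 + 2*Real.sqrt 3) * ε - 1)) (Icc 0 ε) := by
  obtain ⟨hb1, _⟩ := exponent_bounds hε hε8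
  have hx0p := x0_pos hε
  have hx0l := x0_lt hε
  set c := (4 + 2*Real.sqrt 3) * ε - 1 with hc
  have base : IntervalIntegrable (fun y : ℝ => y ^ c) volume 0 (ε - x0 ε) :=
    intervalIntegral.intervalIntegrable_rpow' hb1
  have hright : IntegrableOn (fun x => |x - x0 ε| ^ c) (Icc (x0 ε) ε) := by
    have h1 := base.comp_sub_right (x0 ε)
    rw [zero_add, sub_add_cancel] at h1
    rw [integrableOn_Icc_iff_integrableOn_Ioc]
    have h2 := (intervalIntegrable_iff_integrableOn_Ioc_of_le hx0l.le).1 h1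
    refine h2.congr_fun (fun x hx => ?_) measurableSet_Ioc
    rw [abs_of_pos (sub_pos.2 hx.1)]
  have base2 : IntervalIntegrable (fun y : ℝ => y ^ c) volume 0 (x0 ε) :=
    intervalIntegral.intervalIntegrable_rpow' hb1
  have hleft : IntegrableOn (fun x => |x - x0 ε| ^ c) (Icc 0 (x0 ε)) := by
    have h1 := base2.comp_sub_left (x0 ε)
    rw [sub_zero, sub_self] at h1
    rw [integrableOn_Icc_iff_integrableOn_Ioc]
    have h2 := (intervalIntegrable_iff_integrableOn_Ioc_of_le hx0p.le).1 h1.symm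
    refine h2.congr_fun (fun x hx => ?_) measurableSet_Ioc
    rw [abs_sub_comm, abs_of_nonneg (sub_nonneg.2 hx.2)]
  have := hleft.union hright
  rwa [Icc_union_Icc_eq_Icc hx0p.le hx0l.le] at this

lemma formula_cont (hε : 0 < ε) : ContinuousOn (fun x => (2 * ε ^ 2 / gfun ε ε) *
    (|x - x0 ε| ^ ((4 + 2*Real.sqrt 3) * ε - 1) * Hfun ε x)) (Icc 0 ε \ {x0 ε}) := by
  intro x hx
  obtain ⟨⟨hx0, hxε⟩, hne⟩ := hx
  rw [mem_singleton_iff] at hne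
  refine ContinuousAt.continuousWithinAt ?_
  refine continuousAt_const.mul (ContinuousAt.mul ?_ (Hfun_continuousAt hε (by linarith)
    (ne_vpt hε hxε)))
  exact ContinuousAt.rpow_const (continuous_abs.comp (continuous_sub_right _)).continuousAt
    (Or.inl (abs_ne_zero.2 (sub_ne_zero.2 hne)))

lemma left_integrable (hε : 0 < ε) (hε8 : ε ≤ 1/8) : IntegrableOn (wfun ε) (Icc 0 ε) := by
  obtain ⟨C, hC⟩ := (isCompact_Icc : IsCompact (Icc (0:ℝ) ε)).exists_bound_of_continuousOn
    (f := Hfun ε) (fun x hx => (Hfun_continuousAt hε (by linarith [hx.1])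
      (ne_vpt hε hx.2)).continuousWithinAt)
  set c := (4 + 2*Real.sqrt 3) * ε - 1 with hcdef
  set K := 2 * ε ^ 2 / gfun ε ε with hK
  have hKpos : 0 < K := Kpos hε
  have hr := rpow_integrable hε hε8
  have hS : MeasurableSet (Icc 0 ε \ {x0 ε}) :=
    measurableSet_Icc.diff (measurableSet_singleton _)
  have hFmeas : AEStronglyMeasurable (fun x => K * (|x - x0 ε| ^ c * Hfun ε x))
      (volume.restrict (Icc 0 ε \ {x0 ε})) := (formula_cont hε).aestronglyMeasurable hS
  have hg : IntegrableOn (fun x => K * C * (|x - x0 ε| ^ c)) (Icc 0 ε \ {x0 ε}) :=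
    (hr.mono_set diff_subset).const_mul (K * C)
  have hFi : IntegrableOn (fun x => K * (|x - x0 ε| ^ c * Hfun ε x)) (Icc 0 ε \ {x0 ε}) := by
    refine Integrable.mono' hg hFmeas ?_
    filter_upwards [ae_restrict_mem hS] with x hx
    obtain ⟨⟨hx0, hxε⟩, hne⟩ := hx
    rw [mem_singleton_iff] at hne
    have h1 : (0:ℝ) ≤ |x - x0 ε| ^ c := Real.rpow_nonneg (abs_nonneg _) _
    have h2 : Hfun ε x ≤ C := le_trans (le_abs_self _) (hC x ⟨hx0, hxε⟩)
    have h3 : 0 < Hfun ε x := Hfun_pos hε (by linarith) (ne_vpt hε hxε)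
    rw [Real.norm_eq_abs, abs_of_pos (mul_pos hKpos (mul_pos
      (Real.rpow_pos_of_pos (abs_pos.2 (sub_ne_zero.2 hne)) _) h3))]
    nlinarith [mul_le_mul_of_nonneg_left (mul_le_mul_of_nonneg_left h2 h1) hKpos.le]
  have hwi : IntegrableOn (wfun ε) (Icc 0 ε \ {x0 ε}) := by
    refine hFi.congr_fun (fun x hx => ?_) hS
    obtain ⟨⟨hx0, hxε⟩, hne⟩ := hx
    rw [mem_singleton_iff] at hne
    exact (wfun_left hε hx0 hxε hne).symm
  have hsing : IntegrableOn (wfun ε) {x0 ε} :=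
    (integrableOn_singleton_iff enorm_ne_top).2 (Or.inr (by rw [Real.volume_singleton]; exact ENNReal.zero_lt_top))
  refine (hwi.union hsing).mono_set (fun x hx => ?_)
  by_cases h : x = x0 ε
  · exact Or.inr (by simp [h])
  · exact Or.inl ⟨hx, by simp [h]⟩

lemma wfun_middle (hε : 0 < ε) (hε2 : ε < 1/2) (hx1 : ε ≤ x) (hx2 : x ≤ 1 - ε) :
    wfun ε x = 1 := by
  have hg : gfun ε ε ≠ 0 := (gfun_eps_pos hε).ne'
  unfold wfun pfun phi2
  rcases eq_or_lt_of_le hx1 with heq | h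
  · rw [← heq, if_pos le_rfl, if_pos le_rfl, div_self hε.ne']
    have hp : gfun ε ε / (6 * gfun ε ε) = 1/6 := by field_simp
    rw [hp]
    norm_num
  · rw [if_neg (not_le.2 h), if_pos hx2, if_neg (not_le.2 h), if_pos hx2]
    norm_num

lemma wfun_symm (hε : 0 < ε) (hε2 : ε < 1/2) (hx1 : 1 - ε ≤ x) (hx2 : x ≤ 1) :
    wfun ε x = wfun ε (1 - x) := by
  rcases eq_or_lt_of_le hx1 with heq | h
  · rw [← heq]
    rw [wfun_middle hε hε2 (by linarith) le_rfl, show (1:ℝ) - (1-ε) = ε by ring,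
      wfun_middle hε hε2 le_rfl (by linarith)]
  · have hxε : ¬ x ≤ ε := by linarith
    have hx1ε : ¬ x ≤ 1 - ε := not_le.2 h
    have h1x : 1 - x ≤ ε := by linarith
    unfold wfun pfun phi2
    rw [if_neg hxε, if_neg hx1ε, if_neg hxε, if_neg hx1ε, if_pos h1x, if_pos h1x]

lemma right_cont (hε : 0 < ε) (hε2 : ε < 1/2) :
    ContinuousOn (wfun ε) (Icc (1-ε) 1 \ {1 - x0 ε}) := by
  have hmaps : MapsTo (fun x => 1 - x) (Icc (1-ε) 1 \ {1 - x0 ε}) (Icc 0 ε \ {x0 ε}) := by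
    rintro x ⟨⟨h1, h2⟩, h3⟩
    rw [mem_singleton_iff] at h3
    constructor
    · show (1:ℝ) - x ∈ Icc 0 ε
      rw [mem_Icc]
      constructor <;> linarith
    · show (1:ℝ) - x ∉ ({x0 ε} : Set ℝ)
      rw [mem_singleton_iff]
      intro h; exact h3 (by linarith)
  have hcomp : ContinuousOn (fun x => wfun ε (1 - x)) (Icc (1-ε) 1 \ {1 - x0 ε}) :=
    (left_cont hε).comp ((continuous_const.sub continuous_id).continuousOn) hmaps
  exact hcomp.congr fun x hx => wfun_symm hε hε2 hx.1.1 hx.1.2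

lemma right_integrable (hε : 0 < ε) (hε2 : ε < 1/2) (hε8 : ε ≤ 1/8) :
    IntegrableOn (wfun ε) (Icc (1-ε) 1) := by
  have l := left_integrable hε hε8
  have ii : IntervalIntegrable (wfun ε) volume 0 ε :=
    (intervalIntegrable_iff_integrableOn_Icc_of_le hε.le).2 l
  have i2 := ii.comp_sub_left 1
  rw [sub_zero] at i2
  have i3 := (intervalIntegrable_iff_integrableOn_Icc_of_le (by linarith : 1-ε ≤ 1)).1 i2.symm
  exact i3.congr_fun (fun x hx => (wfun_symm hε hε2 hx.1 hx.2).symm) measurableSet_Icc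

lemma right_tendsto (hε : 0 < ε) (hε2 : ε < 1/2) (hε8 : ε ≤ 1/8) :
    Tendsto (wfun ε) (𝓝[≠] (1 - x0 ε)) atTop := by
  have hx0p := x0_pos hε
  have hx0l := x0_lt hε
  have hmap : Tendsto (fun x : ℝ => 1 - x) (𝓝[≠] (1 - x0 ε)) (𝓝[≠] (x0 ε)) := by
    rw [tendsto_nhdsWithin_iff]
    constructor
    · have h : Tendsto (fun x : ℝ => 1 - x) (𝓝 (1 - x0 ε)) (𝓝 (1 - (1 - x0 ε))) :=
        (continuous_const.sub continuous_id).tendsto _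
      have h' : (1:ℝ) - (1 - x0 ε) = x0 ε := by ring
      rw [h'] at h
      exact h.mono_left nhdsWithin_le_nhds
    · filter_upwards [self_mem_nhdsWithin] with x hx
      simp only [mem_compl_iff, mem_singleton_iff] at hx ⊢
      intro h; exact hx (by linarith)
  have main := (left_tendsto hε hε8).comp hmap
  refine main.congr' ?_
  filter_upwards [mem_nhdsWithin_of_mem_nhds
    (Ioo_mem_nhds (by linarith : 1-ε < 1 - x0 ε) (by linarith : 1 - x0 ε < 1))] with x hx
  exact (wfun_symm hε hε2 hx.1.le hx.2.le).symm

end StmtAux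

open StmtAux

theorem stmt2 :
    (∃ ε₀ > (0:ℝ), ∀ ε : ℝ, 0 < ε → ε ≤ ε₀ →
      ContinuousOn (wfun ε) (Icc 0 1 \ {x0 ε, 1 - x0 ε}) ∧
      IntegrableOn (wfun ε) (Icc 0 1) ∧
      (∀ x ∈ Icc (0:ℝ) 1 \ {x0 ε, 1 - x0 ε}, 0 < wfun ε x) ∧
      Tendsto (wfun ε) (𝓝[≠] (x0 ε)) atTop ∧
      Tendsto (wfun ε) (𝓝[≠] (1 - x0 ε)) atTop) ∧
    (∀ x ∈ Ioo (0:ℝ) 1,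
      Tendsto (fun ε => pfun ε x) (𝓝[>] (0:ℝ)) (𝓝 (1/6)) ∧
      Tendsto (fun ε => wfun ε x) (𝓝[>] (0:ℝ)) (𝓝 1)) := by
  constructor
  · refine ⟨1/8, by norm_num, fun ε hε hε8 => ?_⟩
    have hε2 : ε < 1/2 := by linarith
    have hx0p := x0_pos hε
    have hx0l := x0_lt hε
    have hU : Icc (0:ℝ) 1 \ {x0 ε, 1 - x0 ε} =
        (Icc 0 ε \ {x0 ε}) ∪ (Icc ε (1-ε) ∪ (Icc (1-ε) 1 \ {1 - x0 ε})) := by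
      ext x
      simp only [mem_diff, mem_Icc, mem_union, mem_insert_iff, mem_singleton_iff, not_or]
      constructor
      · rintro ⟨⟨h0, h1⟩, hne1, hne2⟩
        rcases le_or_gt x ε with h | h
        · exact Or.inl ⟨⟨h0, h⟩, hne1⟩
        rcases le_or_gt x (1-ε) with h' | h'
        · exact Or.inr (Or.inl ⟨h.le, h'⟩)
        · exact Or.inr (Or.inr ⟨⟨h'.le, h1⟩, hne2⟩)
      · rintro (⟨⟨h0, h1⟩, hne⟩ | ⟨h0, h1⟩ | ⟨⟨h0, h1⟩, hne⟩)
        · exact ⟨⟨h0, by linarith⟩, hne, by intro h; rw [h] at h1; linarith⟩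
        · exact ⟨⟨by linarith, by linarith⟩, by intro h; rw [h] at h0; linarith,
            by intro h; rw [h] at h1; linarith⟩
        · exact ⟨⟨by linarith, h1⟩, by intro h; rw [h] at h0; linarith, hne⟩
    have hB : ContinuousOn (wfun ε) (Icc ε (1-ε)) :=
      continuousOn_const.congr (fun x hx => wfun_middle hε hε2 hx.1 hx.2)
    refine ⟨?_, ?_, ?_, left_tendsto hε hε8, right_tendsto hε hε2 hε8⟩
    · rw [hU]
      intro x hx
      have hxA : x ≠ x0 ε := by
        rcases hx with h | h | h
        · simpa using h.2
        · have : ε ≤ x := h.1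
          intro hh; rw [hh] at this; linarith
        · have : 1 - ε ≤ x := h.1.1
          intro hh; rw [hh] at this; linarith
      have hxC : x ≠ 1 - x0 ε := by
        rcases hx with h | h | h
        · have : x ≤ ε := h.1.2
          intro hh; rw [hh] at this; linarith
        · have : x ≤ 1 - ε := h.2
          intro hh; rw [hh] at this; linarith
        · simpa using h.2
      have cwA : ContinuousWithinAt (wfun ε) (Icc 0 ε \ {x0 ε}) x := by
        by_cases hc : x ∈ closure (Icc 0 ε \ {x0 ε})
        · have hxI : x ∈ Icc 0 ε := closure_minimal diff_subset isClosed_Icc hc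
          exact (left_cont hε).continuousWithinAt ⟨hxI, by simpa using hxA⟩
        · exact continuousWithinAt_of_notMem_closure hc
      have cwB : ContinuousWithinAt (wfun ε) (Icc ε (1-ε)) x := by
        by_cases hc : x ∈ Icc ε (1-ε)
        · exact hB.continuousWithinAt hc
        · exact continuousWithinAt_of_notMem_closure
            (by rwa [isClosed_Icc.closure_eq])
      have cwC : ContinuousWithinAt (wfun ε) (Icc (1-ε) 1 \ {1 - x0 ε}) x := by
        by_cases hc : x ∈ closure (Icc (1-ε) 1 \ {1 - x0 ε})
        · have hxI : x ∈ Icc (1-ε) 1 := closure_minimal diff_subset isClosed_Icc hc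
          exact (right_cont hε hε2).continuousWithinAt ⟨hxI, by simpa using hxC⟩
        · exact continuousWithinAt_of_notMem_closure hc
      exact cwA.union (cwB.union cwC)
    · have h1 := left_integrable hε hε8
      have h2 : IntegrableOn (wfun ε) (Icc ε (1-ε)) := by
        have hc : IntegrableOn (fun _ : ℝ => (1:ℝ)) (Icc ε (1-ε)) :=
          integrableOn_const (by rw [Real.volume_Icc]; exact ENNReal.ofReal_ne_top)
        exact hc.congr_fun (fun x hx => (wfun_middle hε hε2 hx.1 hx.2).symm) measurableSet_Icc
      have h3 := right_integrable hε hε2 hε8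
      refine ((h1.union h2).union h3).mono_set (fun x hx => ?_)
      rw [mem_Icc] at hx
      rcases le_or_gt x ε with h | h
      · exact Or.inl (Or.inl ⟨hx.1, h⟩)
      rcases le_or_gt x (1-ε) with h' | h'
      · exact Or.inl (Or.inr ⟨h.le, h'⟩)
      · exact Or.inr ⟨h'.le, hx.2⟩
    · intro x hx
      rw [hU] at hx
      rcases hx with ⟨⟨h0, h1⟩, hne⟩ | h | ⟨⟨h0, h1⟩, hne⟩
      · exact left_pos hε h0 h1 (by simpa using hne)
      · rw [wfun_middle hε hε2 h.1 h.2]; norm_num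
      · rw [wfun_symm hε hε2 h0 h1]
        have hne' : x ≠ 1 - x0 ε := by simpa using hne
        refine left_pos hε (by linarith) (by linarith) ?_
        intro hh; exact hne' (by linarith)
  · rintro x ⟨hx0, hx1⟩
    have hmin : (0:ℝ) < min x (1 - x) := lt_min hx0 (by linarith)
    have hmem : Ioo (0:ℝ) (min x (1 - x)) ∈ 𝓝[>] (0:ℝ) :=
      Ioo_mem_nhdsGT_of_mem ⟨le_rfl, hmin⟩
    have hev : ∀ᶠ ε in 𝓝[>] (0:ℝ), pfun ε x = 1/6 ∧ wfun ε x = 1 := by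
      filter_upwards [hmem] with ε hε
      obtain ⟨hε0, hεm⟩ := hε
      have hεx : ε < x := lt_of_lt_of_le hεm (min_le_left _ _)
      have hεx' : ε < 1 - x := lt_of_lt_of_le hεm (min_le_right _ _)
      have hp : pfun ε x = 1/6 := by
        unfold pfun
        rw [if_neg (not_le.2 hεx), if_pos (by linarith : x ≤ 1-ε)]
      refine ⟨hp, ?_⟩
      unfold wfun phi2
      rw [hp, if_neg (not_le.2 hεx), if_pos (by linarith : x ≤ 1-ε)]
      norm_num
    constructor
    · exact Tendsto.congr' (by filter_upwards [hev] with ε h; exact h.1.symm) tendsto_const_nhds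
    · exact Tendsto.congr' (by filter_upwards [hev] with ε h; exact h.2.symm) tendsto_const_nhds
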